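/- arXiv:0709.3185 — 9 statements merged into one kernel-verified Lean document; each statement's English description precedes it below -/
import Mathlib

section
/- If G is a finite nilpotent group of class at most 2 generated by 2 elements, then |G| = |G'|^2 · |Z(G)|, where G' is the derived subgroup and Z(G) is the center. -/
open scoped commutatorElement

/-- If `G` is a finite nilpotent group of class at most 2 (i.e. `G' ≤ Z(G)`) generated by
two elements `a, b`, then `|G| = |G'|² · |Z(G)|`. -/
theorem stmt_0 {G : Type*} [Group G] [Finite G]
    (hclass : commutator G ≤ Subgroup.center G)
    (a b : G) (hgen : Subgroup.closure ({a, b} : Set G) = ⊤) :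
    Nat.card G = Nat.card (commutator G) ^ 2 * Nat.card (Subgroup.center G) := by
  classical
  -- all commutators are central
  have hc : ∀ g h : G, ⁅g, h⁆ ∈ Subgroup.center G := fun g h =>
    hclass ((commutator_def G) ▸
      Subgroup.commutator_mem_commutator (Subgroup.mem_top g) (Subgroup.mem_top h))
  -- bilinearity in the first argument
  have hz : ∀ x g h : G, ⁅g * h, x⁆ = ⁅g, x⁆ * ⁅h, x⁆ := by
    intro x g h
    have hcen := Subgroup.mem_center_iff.mp (hc h x)
    calc ⁅g * h, x⁆ = g * ⁅h, x⁆ * (x * g⁻¹ * x⁻¹) := by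
          simp only [commutatorElement_def]; group
      _ = ⁅h, x⁆ * g * (x * g⁻¹ * x⁻¹) := by rw [hcen g]
      _ = ⁅h, x⁆ * ⁅g, x⁆ := by simp only [commutatorElement_def]; group
      _ = ⁅g, x⁆ * ⁅h, x⁆ := (hcen ⁅g, x⁆).symm
  let φ : G → G →* G := fun x =>
    { toFun := fun g => ⁅g, x⁆
      map_one' := commutatorElement_one_left x
      map_mul' := fun g h => hz x g h }
  set N : Subgroup G := Subgroup.closure {⁅a, b⁆} with hNdef
  have hcN : ⁅a, b⁆ ∈ N := Subgroup.subset_closure rfl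
  -- every commutator against a generator lies in N
  have h1 : ∀ g : G, ⁅g, a⁆ ∈ N := by
    intro g
    have hle : Subgroup.closure ({a, b} : Set G) ≤ N.comap (φ a) := by
      apply Subgroup.closure_le _ |>.mpr
      rintro x hx
      simp only [Set.mem_insert_iff, Set.mem_singleton_iff] at hx
      rcases hx with hx | hx <;> rw [hx]
      · show ⁅a, a⁆ ∈ N; rw [commutatorElement_self]; exact N.one_mem
      · show ⁅b, a⁆ ∈ N; rw [← commutatorElement_inv]; exact N.inv_mem hcN
    exact Subgroup.mem_comap.mp (hle (by rw [hgen]; trivial))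
  have h2 : ∀ g : G, ⁅g, b⁆ ∈ N := by
    intro g
    have hle : Subgroup.closure ({a, b} : Set G) ≤ N.comap (φ b) := by
      apply Subgroup.closure_le _ |>.mpr
      rintro x hx
      simp only [Set.mem_insert_iff, Set.mem_singleton_iff] at hx
      rcases hx with hx | hx <;> rw [hx]
      · exact hcN
      · show ⁅b, b⁆ ∈ N; rw [commutatorElement_self]; exact N.one_mem
    exact Subgroup.mem_comap.mp (hle (by rw [hgen]; trivial))
  -- all commutators lie in N
  have hN : ∀ g h : G, ⁅g, h⁆ ∈ N := by
    intro g h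
    have hle : Subgroup.closure ({a, b} : Set G) ≤ N.comap (φ h) := by
      apply Subgroup.closure_le _ |>.mpr
      rintro x hx
      simp only [Set.mem_insert_iff, Set.mem_singleton_iff] at hx
      rcases hx with hx | hx <;> rw [hx]
      · show ⁅a, h⁆ ∈ N; rw [← commutatorElement_inv]; exact N.inv_mem (h1 h)
      · show ⁅b, h⁆ ∈ N; rw [← commutatorElement_inv]; exact N.inv_mem (h2 h)
    exact Subgroup.mem_comap.mp (hle (by rw [hgen]; trivial))
  -- the commutator subgroup is N
  have hcomm : commutator G = N := by
    apply le_antisymm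
    · rw [commutator_def]
      exact Subgroup.commutator_le.mpr fun g _ h _ => hN g h
    · apply Subgroup.closure_le _ |>.mpr
      rintro x rfl
      exact (commutator_def G) ▸
        Subgroup.commutator_mem_commutator (Subgroup.mem_top a) (Subgroup.mem_top b)
  -- the homomorphism g ↦ (⁅g,a⁆, ⁅g,b⁆)
  let f : G →* G × G := (φ a).prod (φ b)
  have hker : f.ker = Subgroup.center G := by
    ext g
    rw [MonoidHom.mem_ker, Prod.ext_iff]
    constructor
    · rintro ⟨ha, hb⟩
      have hca : Commute g a := commutatorElement_eq_one_iff_commute.mp ha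
      have hcb : Commute g b := commutatorElement_eq_one_iff_commute.mp hb
      rw [Subgroup.mem_center_iff]
      intro h
      have hle : Subgroup.closure ({a, b} : Set G) ≤ Subgroup.centralizer {g} := by
        apply Subgroup.closure_le _ |>.mpr
        rintro x hx
        simp only [Set.mem_insert_iff, Set.mem_singleton_iff] at hx
        rcases hx with hx | hx <;> rw [hx]
        · exact Subgroup.mem_centralizer_singleton_iff.mpr hca.symm
        · exact Subgroup.mem_centralizer_singleton_iff.mpr hcb.symm
      have := Subgroup.mem_centralizer_singleton_iff.mp (hle (by rw [hgen]; trivial) :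
        h ∈ Subgroup.centralizer {g})
      exact this
    · intro hg
      have := Subgroup.mem_center_iff.mp hg
      constructor
      · exact commutatorElement_eq_one_iff_commute.mpr ((this a).symm)
      · exact commutatorElement_eq_one_iff_commute.mpr ((this b).symm)
  have hrange : f.range = N.prod N := by
    apply le_antisymm
    · rintro _ ⟨g, rfl⟩
      exact Subgroup.mem_prod.mpr ⟨h1 g, h2 g⟩
    · rintro ⟨x, y⟩ hxy
      obtain ⟨hx, hy⟩ := Subgroup.mem_prod.mp hxy
      obtain ⟨m, rfl⟩ := Subgroup.mem_closure_singleton.mp hx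
      obtain ⟨k, rfl⟩ := Subgroup.mem_closure_singleton.mp hy
      refine ⟨b ^ (-m) * a ^ k, ?_⟩
      have fa : f a = (1, ⁅a, b⁆) := by
        show (⁅a, a⁆, ⁅a, b⁆) = _
        rw [commutatorElement_self]
      have fb : f b = (⁅a, b⁆⁻¹, 1) := by
        show (⁅b, a⁆, ⁅b, b⁆) = _
        rw [commutatorElement_self, commutatorElement_inv]
      rw [map_mul, map_zpow, map_zpow, fa, fb]
      simp only [Prod.pow_mk, Prod.mk_mul_mk, one_zpow, one_mul, mul_one, inv_zpow,
        zpow_neg, inv_inv, Prod.inv_mk, inv_one]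
  -- counting
  have e1 : Nat.card G = Nat.card (G ⧸ f.ker) * Nat.card f.ker :=
    Subgroup.card_eq_card_quotient_mul_card_subgroup f.ker
  have e2 : Nat.card (G ⧸ f.ker) = Nat.card f.range :=
    Nat.card_congr (QuotientGroup.quotientKerEquivRange f).toEquiv
  have e3 : Nat.card f.range = Nat.card N ^ 2 := by
    rw [hrange]
    have := Nat.card_congr (Subgroup.prodEquiv N N).toEquiv
    rw [this, Nat.card_prod, sq]
  rw [e1, e2, e3, hker, hcomm]
end

section
/- Let G be a finite group of nilpotency class 2 such that exponent of G/G' equals p^r for a prime p > 2. Then the map sending x to x^{p^r} induces an injective homomorphism from G/Ω_r(G) onto G^{p^r}, where Ω_r(G) = {x ∈ G : x^{p^r} = 1}; in particular |G : Ω_r(G)| = |G^{p^r}|. -/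
open scoped commutatorElement


private lemma aux1 {G : Type*} [Group G] (a b d : G) (hd : ∀ x : G, d * x = x * d)
    (hba : b * a = d * (a * b)) : ∀ k : ℕ, b ^ k * a = d ^ k * (a * b ^ k) := by
  intro k
  induction k with
  | zero => simp
  | succ k ih =>
    have hdk : d ^ k * b = b * d ^ k := (Commute.pow_left (hd b) k)
    calc b ^ (k+1) * a = b * (b ^ k * a) := by rw [pow_succ']; group
      _ = b * (d ^ k * (a * b ^ k)) := by rw [ih]
      _ = (b * d ^ k) * (a * b ^ k) := by group
      _ = (d ^ k * b) * (a * b ^ k) := by rw [hdk]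
      _ = d ^ k * ((b * a) * b ^ k) := by group
      _ = d ^ k * ((d * (a * b)) * b ^ k) := by rw [hba]
      _ = (d ^ k * d) * (a * (b * b ^ k)) := by group
      _ = d ^ (k+1) * (a * b ^ (k+1)) := by rw [pow_succ, pow_succ']

private lemma aux2 {G : Type*} [Group G] (a b d : G) (hd : ∀ x : G, d * x = x * d)
    (hba : b * a = d * (a * b)) : ∀ k : ℕ, (a*b)^k = d ^ (k.choose 2) * (a^k * b^k) := by
  intro k
  induction k with
  | zero => simp
  | succ k ih =>
    have hch : (k+1).choose 2 = k.choose 2 + k := by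
      rw [Nat.choose_succ_succ, Nat.choose_one_right, Nat.add_comm]
    have hdk : d ^ k * (a ^ k) = a ^ k * d ^ k := (Commute.pow_left (hd (a^k)) k)
    calc (a*b)^(k+1) = (a*b)^k * (a*b) := by rw [pow_succ]
      _ = d ^ (k.choose 2) * (a^k * b^k) * (a*b) := by rw [ih]
      _ = d ^ (k.choose 2) * (a^k * ((b^k * a) * b)) := by group
      _ = d ^ (k.choose 2) * (a^k * ((d ^ k * (a * b^k)) * b)) := by rw [aux1 a b d hd hba k]
      _ = d ^ (k.choose 2) * ((a^k * d ^ k) * ((a * b^k) * b)) := by group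
      _ = d ^ (k.choose 2) * ((d ^ k * a ^ k) * ((a * b^k) * b)) := by rw [hdk]
      _ = (d ^ (k.choose 2) * d ^ k) * ((a ^ k * a) * (b^k * b)) := by group
      _ = d ^ ((k+1).choose 2) * (a^(k+1) * b^(k+1)) := by
            rw [hch, pow_add, pow_succ, pow_succ]

/-- Let `G` be a finite `p`-group (`p` odd) of nilpotency class at most 2 with
`exp(G/G') = p^r`.  Then `x ↦ x^{p^r}` induces an injective homomorphism from
`G/Ω_r(G)` onto `G^{p^r}`; in particular `|G : Ω_r(G)| = |G^{p^r}|`. -/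
theorem stmt_2 {G : Type*} [Group G] [Finite G] (p r : ℕ) (hp : p.Prime) (hodd : Odd p)
    (hpG : IsPGroup p G) (hclass : commutator G ≤ Subgroup.center G)
    (hexp : Monoid.exponent (G ⧸ commutator G) = p ^ r)
    (Ω : Subgroup G) [Ω.Normal] (hΩ : ∀ x : G, x ∈ Ω ↔ x ^ p ^ r = 1) :
    ∃ φ : G ⧸ Ω →* G, Function.Injective φ ∧
      (∀ x : G, φ (x : G ⧸ Ω) = x ^ p ^ r) ∧
      φ.range = Subgroup.closure {y : G | ∃ x : G, x ^ p ^ r = y} ∧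
      Nat.card (G ⧸ Ω) = Nat.card (Subgroup.closure {y : G | ∃ x : G, x ^ p ^ r = y}) := by
  set n := p ^ r with hn
  -- commutators are central
  have hcen : ∀ g h x : G, ⁅g, h⁆ * x = x * ⁅g, h⁆ := by
    intro g h x
    have hm : ⁅g, h⁆ ∈ commutator G := by
      rw [commutator_def]
      exact Subgroup.commutator_mem_commutator (Subgroup.mem_top g) (Subgroup.mem_top h)
    exact (Subgroup.mem_center_iff.mp (hclass hm) x).symm
  -- p^r-th powers are central
  have hpowcen : ∀ a : G, a ^ n ∈ Subgroup.center G := by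
    intro a
    apply hclass
    have h1 : ((a : G ⧸ commutator G)) ^ n = 1 := by
      rw [← hexp]; exact Monoid.pow_exponent_eq_one _
    rwa [← QuotientGroup.mk_pow, QuotientGroup.eq_one_iff] at h1
  -- commutators have order dividing p^r
  have hdn : ∀ a b : G, ⁅b, a⁆ ^ n = 1 := by
    intro a b
    have hba : b * a = ⁅b, a⁆ * (a * b) := by group
    have h1 := aux1 a b ⁅b, a⁆ (hcen b a) hba n
    have h2 : b ^ n * a = a * b ^ n := (Subgroup.mem_center_iff.mp (hpowcen b) a).symm
    have h3 : ⁅b, a⁆ ^ n * (a * b ^ n) = 1 * (a * b ^ n) := by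
      rw [← h1, h2, one_mul]
    exact mul_right_cancel h3
  -- the power map is a homomorphism
  have hmul : ∀ a b : G, (a * b) ^ n = a ^ n * b ^ n := by
    intro a b
    have hba : b * a = ⁅b, a⁆ * (a * b) := by group
    have h1 := aux2 a b ⁅b, a⁆ (hcen b a) hba n
    have hnodd : Odd n := hodd.pow
    have hnpos : 0 < n := pow_pos hp.pos r
    have h2 : 2 ∣ n - 1 := (Nat.Odd.sub_odd hnodd odd_one).two_dvd
    have h3 : n.choose 2 = n * ((n - 1) / 2) := by
      rw [Nat.choose_two_right, Nat.mul_div_assoc n h2]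
    have h4 : ⁅b, a⁆ ^ n.choose 2 = 1 := by
      rw [h3, pow_mul, hdn a b, one_pow]
    rw [h1, h4, one_mul]
  let φ₀ : G →* G := MonoidHom.mk' (fun x => x ^ n) hmul
  have hker : ∀ x ∈ Ω, φ₀ x = 1 := fun x hx => (hΩ x).mp hx
  let φ : G ⧸ Ω →* G := QuotientGroup.lift Ω φ₀ hker
  have hφ : ∀ x : G, φ (x : G ⧸ Ω) = x ^ n := fun x => rfl
  have hinj : Function.Injective φ := by
    rw [injective_iff_map_eq_one]
    intro q hq
    induction q using QuotientGroup.induction_on with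
    | H x =>
      rw [QuotientGroup.eq_one_iff, hΩ]
      exact hq
  have hS : {y : G | ∃ x : G, x ^ n = y} = Set.range φ := by
    ext y
    constructor
    · rintro ⟨x, rfl⟩; exact ⟨(x : G ⧸ Ω), rfl⟩
    · rintro ⟨q, rfl⟩
      induction q using QuotientGroup.induction_on with
      | H x => exact ⟨x, rfl⟩
  have hrange : φ.range = Subgroup.closure {y : G | ∃ x : G, x ^ n = y} := by
    rw [hS, ← MonoidHom.coe_range, Subgroup.closure_eq]
  refine ⟨φ, hinj, hφ, hrange, ?_⟩
  rw [← hrange]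
  exact Nat.card_congr (MonoidHom.ofInjective hinj).toEquiv
end

section
/- Every E-group is a 2-Engel group; that is, if G is a group in which every element commutes with all of its endomorphic images, then [[x,y],y] = 1 for all x, y ∈ G. -/
open scoped commutatorElement

/-- Every `E`-group is a 2-Engel group: if every element of `G` commutes with all of its
endomorphic images, then `⁅⁅x, y⁆, y⁆ = 1` for all `x, y ∈ G`. -/
theorem stmt_4 {G : Type*} [Group G]
    (hE : ∀ φ : G →* G, ∀ g : G, Commute g (φ g)) :
    ∀ x y : G, ⁅⁅x, y⁆, y⁆ = 1 := by
  intro x y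
  have h : Commute y (x * y * x⁻¹) := hE (MulAut.conj x).toMonoidHom y
  have h2 : Commute y ⁅x, y⁆ := by
    have := h.mul_right (Commute.inv_right (Commute.refl y))
    simpa [commutatorElement_def, mul_assoc] using this
  exact commutatorElement_eq_one_iff_commute.mpr h2.symm
end

section
/- Let G be a non-abelian p-group of class 2 with cyclic derived subgroup such that Ω_r(G) = Z(G) where p^r = exp(G/G'). If p is odd, this leads to a contradiction; hence any such group satisfies p = 2. -/
open scoped commutatorElement

/-- If `c` is central and `y * x = x * y * c`, then `y^n * x = x * y^n * c^n`. -/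
lemma aux_pow_mul {G : Type*} [Group G] (x y c : G)
    (hc : ∀ g : G, c * g = g * c) (hyx : y * x = x * y * c) (n : ℕ) :
    y ^ n * x = x * y ^ n * c ^ n := by
  induction n with
  | zero => simp
  | succ n ih =>
    calc y ^ (n + 1) * x = y * (y ^ n * x) := by rw [pow_succ']; group
      _ = y * (x * y ^ n * c ^ n) := by rw [ih]
      _ = (y * x) * (y ^ n * c ^ n) := by group
      _ = (x * y * c) * (y ^ n * c ^ n) := by rw [hyx]
      _ = x * y * ((c * y ^ n) * c ^ n) := by group
      _ = x * y * ((y ^ n * c) * c ^ n) := by rw [hc (y ^ n)]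
      _ = x * y ^ (n + 1) * c ^ (n + 1) := by rw [pow_succ' y, pow_succ' c]; group

/-- Class-2 binomial identity: if `c` is central and `y * x = x * y * c`, then
`(x*y)^n = x^n * y^n * c^(n.choose 2)`. -/
lemma aux_binom {G : Type*} [Group G] (x y c : G)
    (hc : ∀ g : G, c * g = g * c) (hyx : y * x = x * y * c) (n : ℕ) :
    (x * y) ^ n = x ^ n * y ^ n * c ^ (n.choose 2) := by
  have cpow : ∀ (k : ℕ) (g : G), c ^ k * g = g * c ^ k := fun k g =>
    (Commute.pow_left (show Commute c g from hc g) k).eq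
  induction n with
  | zero => simp
  | succ n ih =>
    calc (x * y) ^ (n + 1) = (x ^ n * y ^ n * c ^ (n.choose 2)) * (x * y) := by
          rw [pow_succ, ih]
      _ = x ^ n * y ^ n * ((c ^ (n.choose 2) * x) * y) := by group
      _ = x ^ n * y ^ n * ((x * c ^ (n.choose 2)) * y) := by rw [cpow (n.choose 2) x]
      _ = x ^ n * ((y ^ n * x) * (c ^ (n.choose 2) * y)) := by group
      _ = x ^ n * ((x * y ^ n * c ^ n) * (y * c ^ (n.choose 2))) := by
          rw [aux_pow_mul x y c hc hyx n, cpow (n.choose 2) y]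
      _ = (x ^ n * x) * (y ^ n * ((c ^ n * y) * c ^ (n.choose 2))) := by group
      _ = (x ^ n * x) * (y ^ n * ((y * c ^ n) * c ^ (n.choose 2))) := by rw [cpow n y]
      _ = x ^ (n + 1) * y ^ (n + 1) * c ^ (n.choose 2 + n) := by
          rw [pow_succ x, pow_succ y, pow_add]; group
      _ = x ^ (n + 1) * y ^ (n + 1) * c ^ ((n + 1).choose 2) := by
          congr 1
          simp [Nat.choose_succ_succ, Nat.add_comm]

/-- Let `G` be a non-abelian finite `p`-group of nilpotency class 2 with cyclic derived
subgroup such that `Ω_r(G) = Z(G)` where `p^r = exp(G/G')`.  Then `p = 2`. -/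
theorem stmt_5 {G : Type*} [Group G] [Finite G] (p r : ℕ) (hp : p.Prime)
    (hpG : IsPGroup p G) (hclass : commutator G ≤ Subgroup.center G)
    (hnonab : ∃ x y : G, x * y ≠ y * x)
    (hcyc : IsCyclic (commutator G))
    (hexp : Monoid.exponent (G ⧸ commutator G) = p ^ r)
    (hΩ : ∀ x : G, x ^ p ^ r = 1 ↔ x ∈ Subgroup.center G) :
    p = 2 := by
  rcases hp.eq_two_or_odd' with h2 | hodd
  · exact h2
  exfalso
  set n := p ^ r with hn
  -- every n-th power lies in the commutator subgroup, hence in the center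
  have hpowmem : ∀ x : G, x ^ n ∈ commutator G := by
    intro x
    have : (QuotientGroup.mk x : G ⧸ commutator G) ^ n = 1 := by
      rw [← hexp]; exact Monoid.pow_exponent_eq_one _
    rwa [← QuotientGroup.mk_pow, QuotientGroup.eq_one_iff] at this
  have hpowc : ∀ x : G, x ^ n ∈ Subgroup.center G := fun x => hclass (hpowmem x)
  -- commutators are central
  have hcent : ∀ x y : G, ∀ g : G, ⁅y, x⁆ * g = g * ⁅y, x⁆ := by
    intro x y g
    have := hclass (Subgroup.commutator_mem_commutator (Subgroup.mem_top y) (Subgroup.mem_top x))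
    exact ((Subgroup.mem_center_iff.mp this) g).symm
  have hyx : ∀ x y : G, y * x = x * y * ⁅y, x⁆ := by
    intro x y
    rw [show x * y * ⁅y, x⁆ = ⁅y, x⁆ * (x * y) from ((hcent x y (x * y))).symm]
    group
  -- commutators have order dividing n
  have hcn : ∀ x y : G, ⁅y, x⁆ ^ n = 1 := by
    intro x y
    have hz := Subgroup.mem_center_iff.mp (hpowc x) y
    have h1 : y * x ^ n * y⁻¹ = x ^ n := by rw [hz]; group
    have hconj : y * x * y⁻¹ = ⁅y, x⁆ * x := by group
    have key : ∀ m : ℕ, y * x ^ m * y⁻¹ = ⁅y, x⁆ ^ m * x ^ m := by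
      intro m
      induction m with
      | zero => simp
      | succ k ih =>
        calc y * x ^ (k + 1) * y⁻¹ = (y * x ^ k * y⁻¹) * (y * x * y⁻¹) := by
              rw [pow_succ]; group
          _ = (⁅y, x⁆ ^ k * x ^ k) * (⁅y, x⁆ * x) := by rw [ih, hconj]
          _ = ⁅y, x⁆ ^ k * ((x ^ k * ⁅y, x⁆) * x) := by group
          _ = ⁅y, x⁆ ^ k * ((⁅y, x⁆ * x ^ k) * x) := by rw [hcent x y (x ^ k)]
          _ = ⁅y, x⁆ ^ (k + 1) * x ^ (k + 1) := by rw [pow_succ, pow_succ]; group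
    have h3 := key n
    rw [h1] at h3
    exact (right_eq_mul.mp h3)
  -- n is odd, so n.choose 2 is a multiple of n
  have hnodd : Odd n := hodd.pow
  have hndvd : n ∣ n.choose 2 := by
    rw [Nat.choose_two_right]
    rcases hnodd with ⟨k, hk⟩
    have h1 : n * (n - 1) / 2 = n * k := by
      have h2 : n - 1 = 2 * k := by omega
      rw [h2, show n * (2 * k) = (n * k) * 2 by ring]
      exact Nat.mul_div_cancel _ (by norm_num)
    rw [h1]; exact Dvd.intro k rfl
  -- the n-th power map is a homomorphism into the cyclic commutator subgroup
  have hhom : ∀ x y : G, (x * y) ^ n = x ^ n * y ^ n := by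
    intro x y
    rw [aux_binom x y ⁅y, x⁆ (hcent x y) (hyx x y) n]
    rcases hndvd with ⟨k, hk⟩
    rw [hk, pow_mul, hcn x y, one_pow, mul_one]
  let f : G →* ↥(commutator G) :=
    { toFun := fun x => ⟨x ^ n, hpowmem x⟩
      map_one' := by simp
      map_mul' := fun x y => by simp [hhom x y] }
  have hker : f.ker ≤ Subgroup.center G := by
    intro x hx
    rw [MonoidHom.mem_ker] at hx
    exact (hΩ x).mp (congrArg Subtype.val hx)
  obtain ⟨a, b, hab⟩ := hnonab
  exact hab (commutative_of_cyclic_center_quotient f hker a b)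
end

section
/- Let G be a group containing a subgroup H isomorphic to Q₈ such that G = H·C_G(H) and C_G(H) = Z(H) × E for an elementary abelian 2-group E. Then G ≅ Q₈ × E. -/
/-- If `G` contains a subgroup `H ≅ Q₈` with `G = H·C_G(H)` and
`C_G(H) = Z(H) × E` for an elementary abelian 2-group `E`, then `G ≅ Q₈ × E`. -/
theorem stmt_7 {G : Type*} [Group G] (H E : Subgroup G)
    (hH : Nonempty (H ≃* QuaternionGroup 2))
    (hprod : ∀ g : G, ∃ h ∈ H, ∃ c ∈ Subgroup.centralizer (H : Set G), g = h * c)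
    (hE2 : ∀ x ∈ E, x ^ 2 = 1)
    (hcent : Subgroup.centralizer (H : Set G)
        = Subgroup.map H.subtype (Subgroup.center H) ⊔ E)
    (hdisj : Subgroup.map H.subtype (Subgroup.center H) ⊓ E = ⊥) :
    Nonempty (G ≃* QuaternionGroup 2 × E) := by
  obtain ⟨e⟩ := hH
  -- E is contained in the centralizer of H
  have hEc : E ≤ Subgroup.centralizer (H : Set G) := by
    rw [hcent]; exact le_sup_right
  have comm : ∀ (h : H) (x : E), Commute (H.subtype h) (E.subtype x) := by
    intro h x
    exact (Subgroup.mem_centralizer_iff.mp (hEc x.2) _ h.2)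
  -- the multiplication map H × E → G
  let φ : H × E →* G := (H.subtype).noncommCoprod (E.subtype) comm
  have hφ : ∀ p : H × E, φ p = (p.1 : G) * (p.2 : G) := fun p => rfl
  have hinj : Function.Injective φ := by
    rw [injective_iff_map_eq_one]
    rintro ⟨h, x⟩ hp
    rw [hφ] at hp
    have hx : (x : G) ∈ H := by
      have hxe : (x : G) = (h : G)⁻¹ := eq_inv_of_mul_eq_one_right hp
      rw [hxe]; exact inv_mem h.2
    -- x ∈ H and x ∈ E ≤ centralizer, so x ∈ center of H
    have hz : (⟨(x : G), hx⟩ : H) ∈ Subgroup.center H := by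
      rw [Subgroup.mem_center_iff]
      intro g
      ext
      push_cast
      exact Subgroup.mem_centralizer_iff.mp (hEc x.2) _ g.2
    have hxz : (x : G) ∈ Subgroup.map H.subtype (Subgroup.center H) :=
      ⟨_, hz, rfl⟩
    have : (x : G) ∈ Subgroup.map H.subtype (Subgroup.center H) ⊓ E := ⟨hxz, x.2⟩
    rw [hdisj, Subgroup.mem_bot] at this
    have hx1 : (x : G) = 1 := this
    have hh1 : (h : G) = 1 := by
      have := hp; rw [hx1, mul_one] at this; exact this
    refine Prod.ext ?_ ?_
    · exact Subtype.ext hh1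
    · exact Subtype.ext hx1
  have hsurj : Function.Surjective φ := by
    have hHr : H ≤ φ.range := by
      intro h hh
      exact ⟨(⟨h, hh⟩, 1), by simp [hφ]⟩
    have hEr : E ≤ φ.range := by
      intro x hx
      exact ⟨(1, ⟨x, hx⟩), by simp [hφ]⟩
    have hcr : Subgroup.centralizer (H : Set G) ≤ φ.range := by
      rw [hcent]
      refine sup_le ?_ hEr
      refine le_trans ?_ hHr
      rintro y ⟨z, _, rfl⟩
      exact z.2
    intro g
    obtain ⟨h, hh, c, hc, rfl⟩ := hprod g
    exact mul_mem (hHr hh) (hcr hc)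
  exact ⟨(MulEquiv.ofBijective φ ⟨hinj, hsurj⟩).symm.trans
    (MulEquiv.prodCongr e (MulEquiv.refl E))⟩
end

section
/- Let G be a finite p-group of class 2 with G = ⟨a,b,c⟩, G' = ⟨[a,b]⟩ × ⟨[a,c]⟩ × ⟨[b,c]⟩ where each factor has order p^t, and G' = Z(G). Then for each g ∈ {a,b,c}, the centralizer C_G(g) equals ⟨g⟩Z(G). -/
open scoped commutatorElement

section Aux
variable {G : Type*} [Group G]

open Subgroup
open scoped IsMulCommutative

lemma comm_mul_aux (hc : ∀ x y : G, ⁅x, y⁆ ∈ Subgroup.center G) (g x y : G) :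
    ⁅g, x * y⁆ = ⁅g, x⁆ * ⁅g, y⁆ := by
  have h : x * ⁅g, y⁆ = ⁅g, y⁆ * x := (Subgroup.mem_center_iff.mp (hc g y)) x
  have key : ⁅g, x * y⁆ = ⁅g, x⁆ * (x * ⁅g, y⁆ * x⁻¹) := by
    simp only [commutatorElement_def]; group
  rw [key, h]; group

/-- The commutator map as a hom when commutators are central. -/
def commHom (hc : ∀ x y : G, ⁅x, y⁆ ∈ Subgroup.center G) (g : G) : G →* G where
  toFun x := ⁅g, x⁆
  map_one' := by simp [commutatorElement_def]
  map_mul' := comm_mul_aux hc g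

lemma indep_aux [Finite G] {n : ℕ} (hn : 0 < n) (u v w : G)
    (hu : u ∈ Subgroup.center G) (hv : v ∈ Subgroup.center G) (hw : w ∈ Subgroup.center G)
    (hou : orderOf u = n) (hov : orderOf v = n) (how : orderOf w = n)
    (hcard : Nat.card (Subgroup.zpowers u ⊔ Subgroup.zpowers v ⊔ Subgroup.zpowers w : Subgroup G)
      = n ^ 3) :
    ∀ i j k : ℤ, u ^ i * v ^ j * w ^ k = 1 → u ^ i = 1 ∧ v ^ j = 1 ∧ w ^ k = 1 := by
  set A := Subgroup.zpowers u with hA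
  set B := Subgroup.zpowers v with hB
  set C := Subgroup.zpowers w with hC
  have hAle : A ≤ Subgroup.center G := Subgroup.zpowers_le.mpr hu
  have hBle : B ≤ Subgroup.center G := Subgroup.zpowers_le.mpr hv
  have hCle : C ≤ Subgroup.center G := Subgroup.zpowers_le.mpr hw
  let f0 : (A × B × C) →* Subgroup.center G :=
    ((Subgroup.inclusion hAle).comp (MonoidHom.fst A (B × C))) *
      ((Subgroup.inclusion hBle).comp ((MonoidHom.fst B C).comp (MonoidHom.snd A (B × C)))) *
      ((Subgroup.inclusion hCle).comp ((MonoidHom.snd B C).comp (MonoidHom.snd A (B × C))))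
  let f : (A × B × C) →* G := (Subgroup.center G).subtype.comp f0
  have hf : ∀ p : A × B × C, f p = (p.1 : G) * (p.2.1 : G) * (p.2.2 : G) := fun p => rfl
  have hrange : f.range = A ⊔ B ⊔ C := by
    apply le_antisymm
    · rintro x ⟨⟨pa, pb, pc⟩, rfl⟩
      rw [hf]
      exact mul_mem (mul_mem (Subgroup.mem_sup_left (Subgroup.mem_sup_left pa.2))
        (Subgroup.mem_sup_left (Subgroup.mem_sup_right pb.2))) (Subgroup.mem_sup_right pc.2)
    · refine sup_le (sup_le ?_ ?_) ?_
      · intro x hx; exact ⟨(⟨x, hx⟩, 1, 1), by simp [hf]⟩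
      · intro x hx; exact ⟨(1, ⟨x, hx⟩, 1), by simp [hf]⟩
      · intro x hx; exact ⟨(1, 1, ⟨x, hx⟩), by simp [hf]⟩
  have hcd : Nat.card (A × B × C) = n ^ 3 := by
    rw [Nat.card_prod, Nat.card_prod, hA, hB, hC, Nat.card_zpowers, Nat.card_zpowers,
      Nat.card_zpowers, hou, hov, how]; ring
  have hcr : Nat.card f.range = n ^ 3 := by rw [hrange]; exact hcard
  have hker : f.ker = ⊥ := by
    have h1 : Nat.card (A × B × C) =
        Nat.card ((A × B × C) ⧸ f.ker) * Nat.card f.ker :=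
      Subgroup.card_eq_card_quotient_mul_card_subgroup f.ker
    have h2 : Nat.card ((A × B × C) ⧸ f.ker) = Nat.card f.range :=
      Nat.card_congr (QuotientGroup.quotientKerEquivRange f).toEquiv
    rw [hcd, h2, hcr] at h1
    have hpos : 0 < n ^ 3 := pow_pos hn 3
    have : Nat.card f.ker = 1 := by
      nlinarith [Nat.card_pos (α := f.ker)]
    exact Subgroup.card_eq_one.mp this
  have hinj : Function.Injective f := (MonoidHom.ker_eq_bot_iff f).mp hker
  intro i j k h
  have : f (⟨u ^ i, Subgroup.zpow_mem_zpowers u i⟩, ⟨v ^ j, Subgroup.zpow_mem_zpowers v j⟩,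
      ⟨w ^ k, Subgroup.zpow_mem_zpowers w k⟩) = f 1 := by
    rw [hf, map_one]; exact h
  have := hinj this
  refine ⟨?_, ?_, ?_⟩
  · exact congrArg (fun p : A × B × C => (p.1 : G)) this
  · exact congrArg (fun p : A × B × C => (p.2.1 : G)) this
  · exact congrArg (fun p : A × B × C => (p.2.2 : G)) this
end Aux

section Aux2
variable {G : Type*} [Group G]

lemma centralizer_eq_aux (hc : ∀ x y : G, ⁅x, y⁆ ∈ Subgroup.center G)
    {n : ℕ} (g s u : G)
    (hdecomp : ∀ x : G, ∃ i j k : ℤ, (g ^ i * s ^ j * u ^ k)⁻¹ * x ∈ Subgroup.center G)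
    (hind : ∀ j k : ℤ, ⁅g, s⁆ ^ j * ⁅g, u⁆ ^ k = 1 → ⁅g, s⁆ ^ j = 1 ∧ ⁅g, u⁆ ^ k = 1)
    (hods : orderOf ⁅g, s⁆ = n) (hodu : orderOf ⁅g, u⁆ = n)
    (hqs : orderOf ((s : G ⧸ Subgroup.center G)) = n)
    (hqu : orderOf ((u : G ⧸ Subgroup.center G)) = n) :
    Subgroup.centralizer {g} = Subgroup.zpowers g ⊔ Subgroup.center G := by
  apply le_antisymm
  · intro x hx
    obtain ⟨i, j, k, hz⟩ := hdecomp x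
    set z : G := (g ^ i * s ^ j * u ^ k)⁻¹ * x with hzdef
    have hxeq : x = g ^ i * s ^ j * u ^ k * z := by rw [hzdef]; group
    -- commutator of g with x is 1
    have hcomm : ⁅g, x⁆ = 1 := by
      apply commutatorElement_eq_one_iff_commute.mpr
      exact (Subgroup.mem_centralizer_iff.mp hx g rfl)
    have hgz : ⁅g, z⁆ = 1 := by
      apply commutatorElement_eq_one_iff_commute.mpr
      exact (Subgroup.mem_center_iff.mp hz g)
    have hval : ⁅g, s⁆ ^ j * ⁅g, u⁆ ^ k = 1 := by
      have := hcomm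
      rw [hxeq] at this
      have e : ⁅g, g ^ i * s ^ j * u ^ k * z⁆
          = ⁅g, g⁆ ^ i * ⁅g, s⁆ ^ j * ⁅g, u⁆ ^ k * ⁅g, z⁆ := by
        have h1 := map_mul (commHom hc g)
        have h2 := map_zpow (commHom hc g)
        simp only [commHom, MonoidHom.coe_mk, OneHom.coe_mk] at h1 h2
        rw [h1, h1, h1, h2, h2, h2]
      rw [e, commutatorElement_self, one_zpow, one_mul, hgz, mul_one] at this
      exact this
    obtain ⟨h1, h2⟩ := hind j k hval
    have hdj : (n : ℤ) ∣ j := by rw [← hods]; exact orderOf_dvd_iff_zpow_eq_one.mpr h1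
    have hdk : (n : ℤ) ∣ k := by rw [← hodu]; exact orderOf_dvd_iff_zpow_eq_one.mpr h2
    have hsj : s ^ j ∈ Subgroup.center G := by
      rw [← QuotientGroup.eq_one_iff (s ^ j) (N := Subgroup.center G)]
      rw [QuotientGroup.mk_zpow]
      exact orderOf_dvd_iff_zpow_eq_one.mp (by rw [hqs]; exact hdj)
    have huk : u ^ k ∈ Subgroup.center G := by
      rw [← QuotientGroup.eq_one_iff (u ^ k) (N := Subgroup.center G)]
      rw [QuotientGroup.mk_zpow]
      exact orderOf_dvd_iff_zpow_eq_one.mp (by rw [hqu]; exact hdk)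
    rw [hxeq, mul_assoc, mul_assoc]
    exact Subgroup.mul_mem _ (Subgroup.mem_sup_left (Subgroup.zpow_mem_zpowers g i))
      (Subgroup.mem_sup_right (Subgroup.mul_mem _ hsj (Subgroup.mul_mem _ huk hz)))
  · refine sup_le ?_ (Subgroup.center_le_centralizer _)
    intro x hx
    obtain ⟨m, rfl⟩ := Subgroup.mem_zpowers_iff.mp hx
    apply Subgroup.mem_centralizer_iff.mpr
    rintro y rfl
    exact (Commute.zpow_right (Commute.refl y) m).symm.eq.symm
end Aux2

section Aux3
variable {G : Type*} [Group G]

lemma decomp_aux (hc : ∀ x y : G, ⁅x, y⁆ ∈ Subgroup.center G)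
    (a b c : G) (hgen : Subgroup.closure ({a, b, c} : Set G) = ⊤) :
    ∀ x : G, ∃ i j k : ℤ,
      ((x : G ⧸ Subgroup.center G))
        = (a : G ⧸ Subgroup.center G) ^ i * (b : G ⧸ Subgroup.center G) ^ j
          * (c : G ⧸ Subgroup.center G) ^ k := by
  letI : CommGroup (G ⧸ Subgroup.center G) :=
    { (inferInstance : Group (G ⧸ Subgroup.center G)) with
      mul_comm := by
        intro x y
        induction x using QuotientGroup.induction_on with
        | H g =>
        induction y using QuotientGroup.induction_on with
        | H h =>
        show ((g * h : G) : G ⧸ Subgroup.center G) = ((h * g : G) : G ⧸ Subgroup.center G)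
        apply QuotientGroup.eq.mpr
        have : (g * h)⁻¹ * (h * g) = ⁅h⁻¹, g⁻¹⁆ := by group
        rw [this]; exact hc _ _ }
  intro x
  have htop : Subgroup.closure ({(a : G ⧸ Subgroup.center G), (b : G ⧸ Subgroup.center G),
      (c : G ⧸ Subgroup.center G)} : Set (G ⧸ Subgroup.center G)) = ⊤ := by
    have := MonoidHom.map_closure (QuotientGroup.mk' (Subgroup.center G)) ({a, b, c} : Set G)
    rw [hgen] at this
    have h2 : Subgroup.closure ((QuotientGroup.mk' (Subgroup.center G)) '' ({a, b, c} : Set G))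
        = ⊤ := by
      rw [← this]
      exact Subgroup.map_top_of_surjective _ (QuotientGroup.mk'_surjective _)
    simpa [Set.image_insert_eq] using h2
  have hx : (x : G ⧸ Subgroup.center G) ∈
      Subgroup.zpowers ((a : G ⧸ Subgroup.center G)) ⊔ Subgroup.zpowers ((b : G ⧸ Subgroup.center G))
        ⊔ Subgroup.zpowers ((c : G ⧸ Subgroup.center G)) := by
    have hle : Subgroup.closure ({(a : G ⧸ Subgroup.center G), (b : G ⧸ Subgroup.center G),
        (c : G ⧸ Subgroup.center G)} : Set (G ⧸ Subgroup.center G)) ≤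
        Subgroup.zpowers ((a : G ⧸ Subgroup.center G)) ⊔ Subgroup.zpowers ((b : G ⧸ Subgroup.center G))
          ⊔ Subgroup.zpowers ((c : G ⧸ Subgroup.center G)) := by
      rw [Subgroup.closure_le]
      rintro y (rfl | rfl | rfl)
      · exact Subgroup.mem_sup_left (Subgroup.mem_sup_left (Subgroup.mem_zpowers _))
      · exact Subgroup.mem_sup_left (Subgroup.mem_sup_right (Subgroup.mem_zpowers _))
      · exact Subgroup.mem_sup_right (Subgroup.mem_zpowers _)
    exact hle (htop ▸ Subgroup.mem_top _)
  obtain ⟨y, hy, z, hz, hyz⟩ := Subgroup.mem_sup.mp hx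
  obtain ⟨y1, hy1, y2, hy2, hy12⟩ := Subgroup.mem_sup.mp hy
  obtain ⟨i, hi⟩ := Subgroup.mem_zpowers_iff.mp hy1
  obtain ⟨j, hj⟩ := Subgroup.mem_zpowers_iff.mp hy2
  obtain ⟨k, hk⟩ := Subgroup.mem_zpowers_iff.mp hz
  exact ⟨i, j, k, by rw [hi, hj, hk, hy12, hyz]⟩
end Aux3


/-- Let `G` be a finite `p`-group of class 2 with `G = ⟨a,b,c⟩`,
`G' = ⟨⁅a,b⁆⟩ × ⟨⁅a,c⁆⟩ × ⟨⁅b,c⁆⟩` with each factor of order `p^t`, `G' = Z(G)`, and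
`G/Z(G) = ⟨aZ⟩ × ⟨bZ⟩ × ⟨cZ⟩` with each factor of order `p^t`.  Then for each
`g ∈ {a,b,c}` one has `C_G(g) = ⟨g⟩·Z(G)`. -/
theorem stmt_9 {G : Type*} [Group G] [Finite G] (p t : ℕ) (hp : p.Prime)
    (hpG : IsPGroup p G) (a b c : G)
    (hgen : Subgroup.closure ({a, b, c} : Set G) = ⊤)
    (hZ : commutator G = Subgroup.center G)
    (hjoin : commutator G
        = Subgroup.zpowers ⁅a, b⁆ ⊔ Subgroup.zpowers ⁅a, c⁆ ⊔ Subgroup.zpowers ⁅b, c⁆)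
    (ho1 : orderOf ⁅a, b⁆ = p ^ t) (ho2 : orderOf ⁅a, c⁆ = p ^ t)
    (ho3 : orderOf ⁅b, c⁆ = p ^ t)
    (hcard : Nat.card (commutator G) = p ^ (3 * t))
    (hqa : orderOf ((a : G ⧸ Subgroup.center G)) = p ^ t)
    (hqb : orderOf ((b : G ⧸ Subgroup.center G)) = p ^ t)
    (hqc : orderOf ((c : G ⧸ Subgroup.center G)) = p ^ t)
    (hqcard : Nat.card (G ⧸ Subgroup.center G) = p ^ (3 * t)) :
    ∀ g ∈ ({a, b, c} : Set G),
      Subgroup.centralizer {g} = Subgroup.zpowers g ⊔ Subgroup.center G := by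
  have hc : ∀ x y : G, ⁅x, y⁆ ∈ Subgroup.center G := by
    intro x y
    rw [← hZ, commutator_def]
    exact Subgroup.commutator_mem_commutator (Subgroup.mem_top x) (Subgroup.mem_top y)
  have commQ : ∀ x y : G ⧸ Subgroup.center G, x * y = y * x := by
    intro x y
    induction x using QuotientGroup.induction_on with
    | H g =>
    induction y using QuotientGroup.induction_on with
    | H h =>
    show ((g * h : G) : G ⧸ Subgroup.center G) = ((h * g : G) : G ⧸ Subgroup.center G)
    apply QuotientGroup.eq.mpr
    have : (g * h)⁻¹ * (h * g) = ⁅h⁻¹, g⁻¹⁆ := by group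
    rw [this]; exact hc _ _
  have reorder : ∀ q1 q2 q3 : G ⧸ Subgroup.center G, q3 * q1 * q2 = q1 * q2 * q3 := by
    intro q1 q2 q3
    rw [commQ q3 q1, mul_assoc, commQ q3 q2, ← mul_assoc]
  have hdec := decomp_aux hc a b c hgen
  have hind3 := indep_aux (n := p ^ t) (pow_pos hp.pos t) ⁅a, b⁆ ⁅a, c⁆ ⁅b, c⁆
    (hc a b) (hc a c) (hc b c) ho1 ho2 ho3
    (by rw [← hjoin, hcard, ← pow_mul, Nat.mul_comm t 3])
  intro g hg
  simp only [Set.mem_insert_iff, Set.mem_singleton_iff] at hg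
  rcases hg with rfl | rfl | rfl
  · -- g = a
    apply centralizer_eq_aux hc g b c _ _ ho1 ho2 hqb hqc
    · intro x
      obtain ⟨i, j, k, hx⟩ := hdec x
      refine ⟨i, j, k, QuotientGroup.eq.mp ?_⟩
      simp only [QuotientGroup.mk_mul, QuotientGroup.mk_zpow]
      exact hx.symm
    · intro j k h
      have h' : ⁅g, b⁆ ^ j * ⁅g, c⁆ ^ k * ⁅b, c⁆ ^ (0 : ℤ) = 1 := by
        rw [zpow_zero, mul_one]; exact h
      obtain ⟨h1, h2, _⟩ := hind3 j k 0 h'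
      exact ⟨h1, h2⟩
  · -- g = b
    apply centralizer_eq_aux hc g a c _ _ ?_ ho3 hqa hqc
    · intro x
      obtain ⟨i, j, k, hx⟩ := hdec x
      refine ⟨j, i, k, QuotientGroup.eq.mp ?_⟩
      simp only [QuotientGroup.mk_mul, QuotientGroup.mk_zpow]
      rw [show ((g : G ⧸ Subgroup.center G)) ^ j * ((a : G ⧸ Subgroup.center G)) ^ i
            * ((c : G ⧸ Subgroup.center G)) ^ k
          = ((a : G ⧸ Subgroup.center G)) ^ i * ((g : G ⧸ Subgroup.center G)) ^ j
            * ((c : G ⧸ Subgroup.center G)) ^ k from by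
        rw [commQ (((g : G ⧸ Subgroup.center G)) ^ j) (((a : G ⧸ Subgroup.center G)) ^ i)]]
      exact hx.symm
    · intro j k h
      have eq1 : ⁅g, a⁆ ^ j = ⁅a, g⁆ ^ (-j) := by
        rw [← commutatorElement_inv, inv_zpow, ← zpow_neg]
      have h' : ⁅a, g⁆ ^ (-j) * ⁅a, c⁆ ^ (0 : ℤ) * ⁅g, c⁆ ^ k = 1 := by
        rw [zpow_zero, mul_one, ← eq1]; exact h
      obtain ⟨h1, _, h2⟩ := hind3 (-j) 0 k h'
      exact ⟨by rw [eq1]; exact h1, h2⟩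
    · rw [← commutatorElement_inv, orderOf_inv]; exact ho1
  · -- g = c
    apply centralizer_eq_aux hc g a b _ _ ?_ ?_ hqa hqb
    · intro x
      obtain ⟨i, j, k, hx⟩ := hdec x
      refine ⟨k, i, j, QuotientGroup.eq.mp ?_⟩
      simp only [QuotientGroup.mk_mul, QuotientGroup.mk_zpow]
      rw [reorder (((a : G ⧸ Subgroup.center G)) ^ i) (((b : G ⧸ Subgroup.center G)) ^ j)
        (((g : G ⧸ Subgroup.center G)) ^ k)]
      exact hx.symm
    · intro j k h
      have eq1 : ⁅g, a⁆ ^ j = ⁅a, g⁆ ^ (-j) := by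
        rw [← commutatorElement_inv, inv_zpow, ← zpow_neg]
      have eq2 : ⁅g, b⁆ ^ k = ⁅b, g⁆ ^ (-k) := by
        rw [← commutatorElement_inv, inv_zpow, ← zpow_neg]
      have h' : ⁅a, b⁆ ^ (0 : ℤ) * ⁅a, g⁆ ^ (-j) * ⁅b, g⁆ ^ (-k) = 1 := by
        rw [zpow_zero, one_mul, ← eq1, ← eq2]; exact h
      obtain ⟨_, h1, h2⟩ := hind3 0 (-j) (-k) h'
      exact ⟨by rw [eq1]; exact h1, by rw [eq2]; exact h2⟩
    · rw [← commutatorElement_inv, orderOf_inv]; exact ho2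
    · rw [← commutatorElement_inv, orderOf_inv]; exact ho3
end

section
/- Let G be a group such that every automorphism of G is central and G' = Z(G). Then Aut(G) is abelian. -/
lemma stmt_11_aux {G : Type*} [Group G]
    (hcentral : ∀ φ : MulAut G, ∀ g : G, g⁻¹ * φ g ∈ Subgroup.center G)
    (φ : MulAut G) : ∀ x ∈ commutator G, φ x = x := by
  have conj : ∀ c t : G, φ c * t * (φ c)⁻¹ = c * t * c⁻¹ := by
    intro c t
    have h := Subgroup.mem_center_iff.mp (hcentral φ c)
    have hc : φ c = c * (c⁻¹ * φ c) := by group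
    rw [hc]
    calc c * (c⁻¹ * φ c) * t * (c * (c⁻¹ * φ c))⁻¹
        = c * ((c⁻¹ * φ c) * t * (c⁻¹ * φ c)⁻¹) * c⁻¹ := by group
      _ = c * (t * (c⁻¹ * φ c) * (c⁻¹ * φ c)⁻¹) * c⁻¹ := by rw [h t]
      _ = c * t * c⁻¹ := by group
  intro x hx
  rw [commutator_def, Subgroup.commutator_def] at hx
  induction hx using Subgroup.closure_induction with
  | mem y hy =>
    obtain ⟨a, -, b, -, rfl⟩ := hy
    rw [map_commutatorElement, commutatorElement_def, commutatorElement_def]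
    calc φ a * φ b * (φ a)⁻¹ * (φ b)⁻¹
        = a * φ b * a⁻¹ * (φ b)⁻¹ := by rw [conj a (φ b)]
      _ = a * (φ b * a⁻¹ * (φ b)⁻¹) := by group
      _ = a * (b * a⁻¹ * b⁻¹) := by rw [conj b a⁻¹]
      _ = a * b * a⁻¹ * b⁻¹ := by group
  | one => exact map_one φ
  | mul y z _ _ hy hz => rw [map_mul, hy, hz]
  | inv y _ hy => rw [map_inv, hy]

/-- If every automorphism of `G` is central and `G' = Z(G)`, then `Aut(G)` is abelian. -/
theorem stmt_11 {G : Type*} [Group G]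
    (hcentral : ∀ φ : MulAut G, ∀ g : G, g⁻¹ * φ g ∈ Subgroup.center G)
    (hZ : commutator G = Subgroup.center G) :
    ∀ φ ψ : MulAut G, φ * ψ = ψ * φ := by
  intro φ ψ
  ext g
  show φ (ψ g) = ψ (φ g)
  have hz : g⁻¹ * ψ g ∈ commutator G := hZ ▸ hcentral ψ g
  have hw : g⁻¹ * φ g ∈ commutator G := hZ ▸ hcentral φ g
  have hwc := Subgroup.mem_center_iff.mp (hcentral φ g)
  have h1 : φ (ψ g) = φ g * (g⁻¹ * ψ g) := by
    have e : ψ g = g * (g⁻¹ * ψ g) := by group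
    rw [e, map_mul, stmt_11_aux hcentral φ _ hz, ← e]
  have h2 : ψ (φ g) = ψ g * (g⁻¹ * φ g) := by
    have e : φ g = g * (g⁻¹ * φ g) := by group
    rw [e, map_mul, stmt_11_aux hcentral ψ _ hw, ← e]
  rw [h1, h2]
  calc φ g * (g⁻¹ * ψ g)
      = g * ((g⁻¹ * φ g) * (g⁻¹ * ψ g)) := by group
    _ = g * ((g⁻¹ * ψ g) * (g⁻¹ * φ g)) := by rw [← hwc (g⁻¹ * ψ g)]
    _ = ψ g * (g⁻¹ * φ g) := by group
end

section
/- In a group G of class 2 with exp(G') dividing p^t and exp(G) = p^{r+t}, suppose a^{p^r·m}·b^{p^r·n}·c^{p^r·l} = 1 implies p^t divides m, n, l whenever a,b,c generate G with G/Z(G) of type (p^t, p^t, p^t). Then ⟨a^{p^r}, b^{p^r}, c^{p^r}⟩ is the internal direct product ⟨a^{p^r}⟩ × ⟨b^{p^r}⟩ × ⟨c^{p^r}⟩, each factor cyclic of order p^t. -/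
open scoped commutatorElement

section Aux

variable {G : Type*} [Group G]

/-- If the commutator of `x` and `y` is central and killed by `n`, then `x^n` commutes with `y`. -/
lemma commute_pow_of_commutator_central {x y : G} (hc : ∀ g : G, ⁅x, y⁆ * g = g * ⁅x, y⁆)
    {n : ℕ} (hn : ⁅x, y⁆ ^ n = 1) : Commute (x ^ n) y := by
  have hzx : Commute ⁅x, y⁆ x := hc x
  have key : ∀ m : ℕ, x ^ m * y = ⁅x, y⁆ ^ m * (y * x ^ m) := by
    intro m
    induction m with
    | zero => simp
    | succ m ih =>
      have hxy : x * y = ⁅x, y⁆ * (y * x) := by group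
      calc x ^ (m + 1) * y = x * (x ^ m * y) := by rw [pow_succ']; group
        _ = x * (⁅x, y⁆ ^ m * (y * x ^ m)) := by rw [ih]
        _ = (x * ⁅x, y⁆ ^ m) * (y * x ^ m) := by group
        _ = (⁅x, y⁆ ^ m * x) * (y * x ^ m) := by rw [(hzx.pow_left m).symm.eq]
        _ = ⁅x, y⁆ ^ m * (x * y) * x ^ m := by group
        _ = ⁅x, y⁆ ^ m * (⁅x, y⁆ * (y * x)) * x ^ m := by rw [hxy]
        _ = ⁅x, y⁆ ^ (m + 1) * (y * x ^ (m + 1)) := by rw [pow_succ]; group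
  have := key n
  rw [hn, one_mul] at this
  exact this

/-- Product formula for three pairwise commuting elements. -/
lemma triple_mul_triple {A B C : G} (hAB : Commute A B) (hAC : Commute A C)
    (hBC : Commute B C) (m1 m2 m3 n1 n2 n3 : ℤ) :
    (A ^ m1 * B ^ m2 * C ^ m3) * (A ^ n1 * B ^ n2 * C ^ n3)
      = A ^ (m1 + n1) * B ^ (m2 + n2) * C ^ (m3 + n3) := by
  have h1 : Commute (A ^ n1) (B ^ m2) := hAB.zpow_zpow n1 m2
  have h2 : Commute (A ^ n1) (C ^ m3) := hAC.zpow_zpow n1 m3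
  have h3 : Commute (B ^ n2) (C ^ m3) := hBC.zpow_zpow n2 m3
  calc (A ^ m1 * B ^ m2 * C ^ m3) * (A ^ n1 * B ^ n2 * C ^ n3)
      = A ^ m1 * B ^ m2 * (C ^ m3 * A ^ n1) * (B ^ n2 * C ^ n3) := by group
    _ = A ^ m1 * B ^ m2 * (A ^ n1 * C ^ m3) * (B ^ n2 * C ^ n3) := by rw [h2.symm.eq]
    _ = A ^ m1 * (B ^ m2 * A ^ n1) * ((C ^ m3 * B ^ n2) * C ^ n3) := by group
    _ = A ^ m1 * (A ^ n1 * B ^ m2) * ((B ^ n2 * C ^ m3) * C ^ n3) := by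
        rw [h1.symm.eq, h3.symm.eq]
    _ = (A ^ m1 * A ^ n1) * (B ^ m2 * B ^ n2) * (C ^ m3 * C ^ n3) := by group
    _ = A ^ (m1 + n1) * B ^ (m2 + n2) * C ^ (m3 + n3) := by
        rw [← zpow_add, ← zpow_add, ← zpow_add]

end Aux

/-- In a finite `p`-group `G` of class 2 generated by `a, b, c`, each of order `p^{r+t}`,
with `exp(G') ∣ p^t`, `exp(G) = p^{r+t}`, `Z(G) = Ω_r(G)`, and `G/Z(G)` of type
`(p^t, p^t, p^t)`: if `a^{p^r m} b^{p^r n} c^{p^r l} = 1` implies `p^t ∣ m, n, l`, then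
`⟨a^{p^r}, b^{p^r}, c^{p^r}⟩ = ⟨a^{p^r}⟩ × ⟨b^{p^r}⟩ × ⟨c^{p^r}⟩` with each factor cyclic
of order `p^t`. -/
theorem stmt_15 {G : Type*} [Group G] [Finite G] (p r t : ℕ) (hp : p.Prime)
    (hpG : IsPGroup p G) (hclass : commutator G ≤ Subgroup.center G)
    (a b c : G) (hgen : Subgroup.closure ({a, b, c} : Set G) = ⊤)
    (hoa : orderOf a = p ^ (r + t)) (hob : orderOf b = p ^ (r + t))
    (hoc : orderOf c = p ^ (r + t))
    (hexpG' : Monoid.exponent (commutator G) ∣ p ^ t)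
    (hexpG : Monoid.exponent G = p ^ (r + t))
    (hΩ : ∀ x : G, x ∈ Subgroup.center G ↔ x ^ p ^ r = 1)
    (hqa : orderOf ((a : G ⧸ Subgroup.center G)) = p ^ t)
    (hqb : orderOf ((b : G ⧸ Subgroup.center G)) = p ^ t)
    (hqc : orderOf ((c : G ⧸ Subgroup.center G)) = p ^ t)
    (hqcard : Nat.card (G ⧸ Subgroup.center G) = p ^ (3 * t))
    (hkey : ∀ m n l : ℤ, a ^ ((p : ℤ) ^ r * m) * b ^ ((p : ℤ) ^ r * n)
        * c ^ ((p : ℤ) ^ r * l) = 1 →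
        ((p : ℤ) ^ t ∣ m ∧ (p : ℤ) ^ t ∣ n ∧ (p : ℤ) ^ t ∣ l)) :
    orderOf (a ^ p ^ r) = p ^ t ∧ orderOf (b ^ p ^ r) = p ^ t ∧
      orderOf (c ^ p ^ r) = p ^ t ∧
      Nat.card (Subgroup.closure ({a ^ p ^ r, b ^ p ^ r, c ^ p ^ r} : Set G))
        = p ^ (3 * t) := by
  have hptpos : 0 < p ^ t := pow_pos hp.pos t
  -- orders of the powers
  have horder : ∀ x : G, orderOf x = p ^ (r + t) → orderOf (x ^ p ^ r) = p ^ t := by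
    intro x hx
    rw [orderOf_pow, hx]
    have hgcd : Nat.gcd (p ^ (r + t)) (p ^ r) = p ^ r :=
      Nat.gcd_eq_right (pow_dvd_pow p (Nat.le_add_right r t))
    rw [hgcd, pow_add, Nat.mul_div_cancel_left _ (pow_pos hp.pos r)]
  have hoA := horder a hoa
  have hoB := horder b hob
  have hoC := horder c hoc
  refine ⟨hoA, hoB, hoC, ?_⟩
  -- pairwise commuting
  set A := a ^ p ^ r with hA
  set B := b ^ p ^ r with hB
  set C := c ^ p ^ r with hC
  have hcomm : ∀ x y : G, Commute (x ^ p ^ r) y := by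
    intro x y
    have hmem : ⁅x, y⁆ ∈ Subgroup.center G :=
      hclass (Subgroup.commutator_mem_commutator (Subgroup.mem_top x) (Subgroup.mem_top y))
    exact commute_pow_of_commutator_central
      (fun g => ((Subgroup.mem_center_iff.mp hmem) g).symm) ((hΩ _).mp hmem)
  have hAB : Commute A B := hcomm a B
  have hAC : Commute A C := hcomm a C
  have hBC : Commute B C := hcomm b C
  -- zpow of A,B,C as zpow of a,b,c
  have hzA : ∀ m : ℤ, A ^ m = a ^ ((p : ℤ) ^ r * m) := by
    intro m
    rw [hA, ← zpow_natCast a (p ^ r), ← zpow_mul]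
    norm_num
  have hzB : ∀ m : ℤ, B ^ m = b ^ ((p : ℤ) ^ r * m) := by
    intro m
    rw [hB, ← zpow_natCast b (p ^ r), ← zpow_mul]
    norm_num
  have hzC : ∀ m : ℤ, C ^ m = c ^ ((p : ℤ) ^ r * m) := by
    intro m
    rw [hC, ← zpow_natCast c (p ^ r), ← zpow_mul]
    norm_num
  haveI : NeZero (p ^ t) := ⟨hptpos.ne'⟩
  -- zpow only depends on the residue mod p^t
  have hres : ∀ x : G, orderOf x = p ^ t →
      ∀ m : ℤ, x ^ m = x ^ (((m : ZMod (p ^ t)).val : ℤ)) := by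
    intro x hx m
    rw [zpow_eq_zpow_iff_modEq, hx]
    have : ((((m : ZMod (p ^ t)).val : ℤ)) : ZMod (p ^ t)) = (m : ZMod (p ^ t)) := by
      rw [Int.cast_natCast, ZMod.natCast_val, ZMod.cast_id]
    exact ((ZMod.intCast_eq_intCast_iff _ _ _).mp this).symm
  -- the parametrization map
  set f : ZMod (p ^ t) × ZMod (p ^ t) × ZMod (p ^ t) → G :=
    fun x => A ^ (x.1.val : ℤ) * B ^ (x.2.1.val : ℤ) * C ^ (x.2.2.val : ℤ) with hf
  have hmul : ∀ x y, f x * f y = f (x + y) := by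
    intro x y
    rw [hf]
    simp only
    rw [triple_mul_triple hAB hAC hBC]
    have e1 : (A : G) ^ ((x.1.val : ℤ) + (y.1.val : ℤ)) = A ^ (((x + y).1.val : ℤ)) := by
      rw [hres A hoA ((x.1.val : ℤ) + (y.1.val : ℤ))]
      congr 2
      push_cast [ZMod.natCast_val, ZMod.cast_id]
      rfl
    have e2 : (B : G) ^ ((x.2.1.val : ℤ) + (y.2.1.val : ℤ)) = B ^ (((x + y).2.1.val : ℤ)) := by
      rw [hres B hoB ((x.2.1.val : ℤ) + (y.2.1.val : ℤ))]
      congr 2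
      push_cast [ZMod.natCast_val, ZMod.cast_id]
      rfl
    have e3 : (C : G) ^ ((x.2.2.val : ℤ) + (y.2.2.val : ℤ)) = C ^ (((x + y).2.2.val : ℤ)) := by
      rw [hres C hoC ((x.2.2.val : ℤ) + (y.2.2.val : ℤ))]
      congr 2
      push_cast [ZMod.natCast_val, ZMod.cast_id]
      rfl
    rw [e1, e2, e3]
  have hone : f 0 = 1 := by
    rw [hf]; simp [ZMod.val_zero]
  have hinv : ∀ x, f (-x) = (f x)⁻¹ := by
    intro x
    apply eq_inv_of_mul_eq_one_left
    rw [hmul, neg_add_cancel, hone]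
  -- injectivity of f
  have hinj : Function.Injective f := by
    intro x y hxy
    have h1 : f (x - y) = 1 := by
      have := hmul x (-y)
      rw [hxy, hinv, mul_inv_cancel] at this
      rw [sub_eq_add_neg]
      exact this.symm
    set d := x - y with hd
    rw [hf] at h1
    simp only at h1
    rw [hzA, hzB, hzC] at h1
    obtain ⟨d1, d2, d3⟩ := hkey _ _ _ h1
    have hz : ∀ u : ZMod (p ^ t), ((p : ℤ) ^ t ∣ (u.val : ℤ)) → u = 0 := by
      intro u hu
      have : ((p ^ t : ℕ) : ℤ) ∣ (u.val : ℤ) := by push_cast; exact_mod_cast hu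
      have hdvd : p ^ t ∣ u.val := by exact_mod_cast this
      have := Nat.eq_zero_of_dvd_of_lt hdvd
      rcases Nat.eq_zero_of_dvd_of_lt hdvd (ZMod.val_lt u) with h
      · exact (ZMod.val_eq_zero u).mp h
    have hd1 : d.1 = 0 := hz _ d1
    have hd2 : d.2.1 = 0 := hz _ d2
    have hd3 : d.2.2 = 0 := hz _ d3
    have : d = 0 := by
      ext <;> simp [hd1, hd2, hd3]
    have hxy0 : x - y = 0 := by rw [← hd]; exact this
    exact sub_eq_zero.mp hxy0
  -- the range of f is exactly the closure
  have hrange : Set.range f = (Subgroup.closure ({A, B, C} : Set G) : Set G) := by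
    apply le_antisymm
    · rintro _ ⟨x, rfl⟩
      have hAmem : A ∈ Subgroup.closure ({A, B, C} : Set G) :=
        Subgroup.subset_closure (by simp)
      have hBmem : B ∈ Subgroup.closure ({A, B, C} : Set G) :=
        Subgroup.subset_closure (by simp)
      have hCmem : C ∈ Subgroup.closure ({A, B, C} : Set G) :=
        Subgroup.subset_closure (by simp)
      exact mul_mem (mul_mem (Subgroup.zpow_mem _ hAmem _) (Subgroup.zpow_mem _ hBmem _))
        (Subgroup.zpow_mem _ hCmem _)
    · -- range f is a subgroup containing A, B, C
      have hsub : ∀ g ∈ ({A, B, C} : Set G), g ∈ Set.range f := by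
        intro g hg
        rcases hg with h | h | h
        · refine ⟨(1, 0, 0), ?_⟩
          have e := hres A hoA 1
          simp only [Int.cast_one, zpow_one] at e
          rw [hf, h]
          simp only [ZMod.val_zero, Nat.cast_zero, zpow_zero, mul_one]
          exact e.symm
        · refine ⟨(0, 1, 0), ?_⟩
          have e := hres B hoB 1
          simp only [Int.cast_one, zpow_one] at e
          rw [hf, h]
          simp only [ZMod.val_zero, Nat.cast_zero, zpow_zero, mul_one, one_mul]
          exact e.symm
        · refine ⟨(0, 0, 1), ?_⟩
          have e := hres C hoC 1
          simp only [Int.cast_one, zpow_one] at e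
          rw [hf, h]
          simp only [ZMod.val_zero, Nat.cast_zero, zpow_zero, mul_one, one_mul]
          exact e.symm
      set K : Subgroup G :=
        { carrier := Set.range f
          one_mem' := ⟨0, hone⟩
          mul_mem' := by
            rintro _ _ ⟨x, rfl⟩ ⟨y, rfl⟩
            exact ⟨x + y, (hmul x y).symm⟩
          inv_mem' := by
            rintro _ ⟨x, rfl⟩
            exact ⟨-x, hinv x⟩ } with hK
      have : Subgroup.closure ({A, B, C} : Set G) ≤ K :=
        (Subgroup.closure_le K).mpr hsub
      exact this
  -- cardinality computation
  have hcard1 : Nat.card (Subgroup.closure ({A, B, C} : Set G)) = Nat.card (Set.range f) :=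
    Nat.card_congr (Equiv.setCongr hrange).symm
  rw [hcard1, Nat.card_range_of_injective hinj]
  simp only [Nat.card_prod, Nat.card_zmod]
  rw [← pow_add, ← pow_add]
  congr 1
  omega
end

section
/- The binary operation on Z_{p^{r+t}}³ defined by (i,j,k)·(i',j',k') = (i+i'−i'j·p^r t₁₁−i'k·p^r t₂₁−j'k·p^r t₃₁, j+j'−i'j·p^r t₁₂−i'k·p^r t₂₂−j'k·p^r t₃₂, k+k'−i'j·p^r t₁₃−i'k·p^r t₂₃−j'k·p^r t₃₃) makes Z_{p^{r+t}}³ into a group. -/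
/-- The binary operation on `Z_{p^{r+t}}³` defined by
`(i,j,k)·(i',j',k') = (i+i'−i'j·p^r t₁₁−i'k·p^r t₂₁−j'k·p^r t₃₁, …)`. -/
def Emul (p r t : ℕ) (T : Matrix (Fin 3) (Fin 3) ℤ)
    (x y : ZMod (p ^ (r + t)) × ZMod (p ^ (r + t)) × ZMod (p ^ (r + t))) :
    ZMod (p ^ (r + t)) × ZMod (p ^ (r + t)) × ZMod (p ^ (r + t)) :=
  (x.1 + y.1 - y.1 * x.2.1 * (((p : ℤ) ^ r * T 0 0 : ℤ) : ZMod (p ^ (r + t)))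
      - y.1 * x.2.2 * (((p : ℤ) ^ r * T 1 0 : ℤ) : ZMod (p ^ (r + t)))
      - y.2.1 * x.2.2 * (((p : ℤ) ^ r * T 2 0 : ℤ) : ZMod (p ^ (r + t))),
   x.2.1 + y.2.1 - y.1 * x.2.1 * (((p : ℤ) ^ r * T 0 1 : ℤ) : ZMod (p ^ (r + t)))
      - y.1 * x.2.2 * (((p : ℤ) ^ r * T 1 1 : ℤ) : ZMod (p ^ (r + t)))
      - y.2.1 * x.2.2 * (((p : ℤ) ^ r * T 2 1 : ℤ) : ZMod (p ^ (r + t))),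
   x.2.2 + y.2.2 - y.1 * x.2.1 * (((p : ℤ) ^ r * T 0 2 : ℤ) : ZMod (p ^ (r + t)))
      - y.1 * x.2.2 * (((p : ℤ) ^ r * T 1 2 : ℤ) : ZMod (p ^ (r + t)))
      - y.2.1 * x.2.2 * (((p : ℤ) ^ r * T 2 2 : ℤ) : ZMod (p ^ (r + t))))

lemma hkey (p r t : ℕ) (htr : t ≤ r) (a b : ℤ) :
    (((p : ℤ) ^ r * a : ℤ) : ZMod (p ^ (r + t))) *
      (((p : ℤ) ^ r * b : ℤ) : ZMod (p ^ (r + t))) = 0 := by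
  have h0 : ((p : ZMod (p ^ (r + t)))) ^ (r + t) = 0 := by
    have := ZMod.natCast_self (p ^ (r + t))
    push_cast at this
    exact this
  have h : ((p : ZMod (p ^ (r + t)))) ^ r * ((p : ZMod (p ^ (r + t)))) ^ r = 0 := by
    obtain ⟨k, hk⟩ := Nat.exists_eq_add_of_le (show r + t ≤ r + r by omega)
    rw [← pow_add, hk, pow_add ((p : ℕ) : ZMod (p ^ (r + t))) (r + t) k, h0, zero_mul]
  push_cast
  linear_combination ((a : ZMod (p ^ (r + t))) * b) * h

/-- This binary operation makes `Z_{p^{r+t}}³` into a group: it is associative, has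
identity `(0,0,0)` and two-sided inverses. -/
theorem stmt_18 (p r t : ℕ) (hp : p.Prime) (ht : 1 ≤ t) (htr : t ≤ r)
    (T : Matrix (Fin 3) (Fin 3) ℤ)
    (hT : IsUnit ((T.map (Int.cast : ℤ → ZMod (p ^ t))).det)) :
    (∀ x y z, Emul p r t T (Emul p r t T x y) z = Emul p r t T x (Emul p r t T y z)) ∧
      (∀ x, Emul p r t T x (0, 0, 0) = x) ∧ (∀ x, Emul p r t T (0, 0, 0) x = x) ∧
      (∀ x, ∃ y, Emul p r t T x y = (0, 0, 0) ∧ Emul p r t T y x = (0, 0, 0)) := by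
  refine ⟨?_, ?_, ?_, ?_⟩
  · rintro ⟨x1, x2, x3⟩ ⟨y1, y2, y3⟩ ⟨z1, z2, z3⟩
    simp only [Emul, Prod.mk.injEq]
    refine ⟨?_, ?_, ?_⟩
    · linear_combination x2 * y1 * z1 * hkey p r t htr (T 0 0) (T 0 1) + x3 * y1 * z1 * hkey p r t htr (T 0 0) (T 1 1) + x3 * y2 * z1 * hkey p r t htr (T 0 0) (T 2 1) + x2 * y1 * z1 * hkey p r t htr (T 0 2) (T 1 0) + x3 * y1 * z1 * hkey p r t htr (T 1 0) (T 1 2) + x3 * y2 * z1 * hkey p r t htr (T 1 0) (T 2 2) + x2 * y1 * z2 * hkey p r t htr (T 0 2) (T 2 0) + x3 * y1 * z2 * hkey p r t htr (T 1 2) (T 2 0) + x3 * y2 * z2 * hkey p r t htr (T 2 0) (T 2 2) + (-1) * x2 * y2 * z1 * hkey p r t htr (T 0 0) (T 0 0) + (-1) * x2 * y3 * z1 * hkey p r t htr (T 0 0) (T 1 0) + (-1) * x2 * y3 * z2 * hkey p r t htr (T 0 0) (T 2 0) + (-1) * x3 * y2 * z1 * hkey p r t htr (T 0 0) (T 1 0)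 + (-1) * x3 * y3 * z1 * hkey p r t htr (T 1 0) (T 1 0) + (-1) * x3 * y3 * z2 * hkey p r t htr (T 1 0) (T 2 0) + (-1) * x3 * y2 * z1 * hkey p r t htr (T 0 1) (T 2 0) + (-1) * x3 * y3 * z1 * hkey p r t htr (T 1 1) (T 2 0) + (-1) * x3 * y3 * z2 * hkey p r t htr (T 2 0) (T 2 1)
    · linear_combination x2 * y1 * z1 * hkey p r t htr (T 0 1) (T 0 1) + x3 * y1 * z1 * hkey p r t htr (T 0 1) (T 1 1) + x2 * y1 * z1 * hkey p r t htr (T 0 2) (T 1 1) + x3 * y1 * z1 * hkey p r t htr (T 1 1) (T 1 2) + x3 * y2 * z1 * hkey p r t htr (T 1 1) (T 2 2) + x2 * y1 * z2 * hkey p r t htr (T 0 2) (T 2 1) + x3 * y1 * z2 * hkey p r t htr (T 1 2) (T 2 1) + x3 * y2 * z2 * hkey p r t htr (T 2 1) (T 2 2) + (-1) * x2 * y2 * z1 * hkey p r t htr (T 0 0) (T 0 1) + (-1) * x2 * y3 * z1 * hkey p r t htr (T 0 1) (T 1 0) + (-1) * x2 * y3 * z2 * hkey p r t htr (T 0 1)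 (T 2 0) + (-1) * x3 * y2 * z1 * hkey p r t htr (T 0 0) (T 1 1) + (-1) * x3 * y3 * z1 * hkey p r t htr (T 1 0) (T 1 1) + (-1) * x3 * y3 * z2 * hkey p r t htr (T 1 1) (T 2 0) + (-1) * x3 * y3 * z1 * hkey p r t htr (T 1 1) (T 2 1) + (-1) * x3 * y3 * z2 * hkey p r t htr (T 2 1) (T 2 1)
    · linear_combination x2 * y1 * z1 * hkey p r t htr (T 0 1) (T 0 2) + x3 * y1 * z1 * hkey p r t htr (T 0 2) (T 1 1) + x3 * y2 * z1 * hkey p r t htr (T 0 2) (T 2 1) + x2 * y1 * z1 * hkey p r t htr (T 0 2) (T 1 2) + x3 * y1 * z1 * hkey p r t htr (T 1 2) (T 1 2) + x3 * y2 * z1 * hkey p r t htr (T 1 2) (T 2 2) + x2 * y1 * z2 * hkey p r t htr (T 0 2) (T 2 2) + x3 * y1 * z2 * hkey p r t htr (T 1 2) (T 2 2) + x3 * y2 * z2 * hkey p r t htr (T 2 2) (T 2 2) + (-1) * x2 * y2 * z1 * hkey p r t htr (T 0 0) (T 0 2) + (-1) * x2 * y3 * z1 * hkey p r t htr (T 0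 2) (T 1 0) + (-1) * x2 * y3 * z2 * hkey p r t htr (T 0 2) (T 2 0) + (-1) * x3 * y2 * z1 * hkey p r t htr (T 0 0) (T 1 2) + (-1) * x3 * y3 * z1 * hkey p r t htr (T 1 0) (T 1 2) + (-1) * x3 * y3 * z2 * hkey p r t htr (T 1 2) (T 2 0) + (-1) * x3 * y2 * z1 * hkey p r t htr (T 0 1) (T 2 2) + (-1) * x3 * y3 * z1 * hkey p r t htr (T 1 1) (T 2 2) + (-1) * x3 * y3 * z2 * hkey p r t htr (T 2 1) (T 2 2)
  · rintro ⟨x1, x2, x3⟩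
    simp only [Emul, Prod.mk.injEq]
    refine ⟨by ring, by ring, by ring⟩
  · rintro ⟨x1, x2, x3⟩
    simp only [Emul, Prod.mk.injEq]
    refine ⟨by ring, by ring, by ring⟩
  · rintro ⟨x1, x2, x3⟩
    refine ⟨(
      -(x1) + -((((p : ℤ) ^ r * T 0 0 : ℤ) : ZMod (p ^ (r + t))) * x1 * x2) + -((((p : ℤ) ^ r * T 1 0 : ℤ) : ZMod (p ^ (r + t))) * x1 * x3) + -((((p : ℤ) ^ r * T 2 0 : ℤ) : ZMod (p ^ (r + t))) * x2 * x3),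
      -(x2) + -((((p : ℤ) ^ r * T 0 1 : ℤ) : ZMod (p ^ (r + t))) * x1 * x2) + -((((p : ℤ) ^ r * T 1 1 : ℤ) : ZMod (p ^ (r + t))) * x1 * x3) + -((((p : ℤ) ^ r * T 2 1 : ℤ) : ZMod (p ^ (r + t))) * x2 * x3),
      -(x3) + -((((p : ℤ) ^ r * T 0 2 : ℤ) : ZMod (p ^ (r + t))) * x1 * x2) + -((((p : ℤ) ^ r * T 1 2 : ℤ) : ZMod (p ^ (r + t))) * x1 * x3) + -((((p : ℤ) ^ r * T 2 2 : ℤ) : ZMod (p ^ (r + t))) * x2 * x3)), ?_, ?_⟩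
    · simp only [Emul, Prod.mk.injEq]
      refine ⟨?_, ?_, ?_⟩
      · linear_combination x1 * x2 * x2 * hkey p r t htr (T 0 0) (T 0 0) + (2) * x1 * x2 * x3 * hkey p r t htr (T 0 0) (T 1 0) + x2 * x2 * x3 * hkey p r t htr (T 0 0) (T 2 0) + x1 * x3 * x3 * hkey p r t htr (T 1 0) (T 1 0) + x2 * x3 * x3 * hkey p r t htr (T 1 0) (T 2 0) + x1 * x2 * x3 * hkey p r t htr (T 0 1) (T 2 0) + x1 * x3 * x3 * hkey p r t htr (T 1 1) (T 2 0) + x2 * x3 * x3 * hkey p r t htr (T 2 0) (T 2 1)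
      · linear_combination x1 * x2 * x2 * hkey p r t htr (T 0 0) (T 0 1) + x1 * x2 * x3 * hkey p r t htr (T 0 1) (T 1 0) + x2 * x2 * x3 * hkey p r t htr (T 0 1) (T 2 0) + x1 * x2 * x3 * hkey p r t htr (T 0 0) (T 1 1) + x1 * x3 * x3 * hkey p r t htr (T 1 0) (T 1 1) + x2 * x3 * x3 * hkey p r t htr (T 1 1) (T 2 0) + x1 * x2 * x3 * hkey p r t htr (T 0 1) (T 2 1) + x1 * x3 * x3 * hkey p r t htr (T 1 1) (T 2 1) + x2 * x3 * x3 * hkey p r t htr (T 2 1) (T 2 1)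
      · linear_combination x1 * x2 * x2 * hkey p r t htr (T 0 0) (T 0 2) + x1 * x2 * x3 * hkey p r t htr (T 0 2) (T 1 0) + x2 * x2 * x3 * hkey p r t htr (T 0 2) (T 2 0) + x1 * x2 * x3 * hkey p r t htr (T 0 0) (T 1 2) + x1 * x3 * x3 * hkey p r t htr (T 1 0) (T 1 2) + x2 * x3 * x3 * hkey p r t htr (T 1 2) (T 2 0) + x1 * x2 * x3 * hkey p r t htr (T 0 1) (T 2 2) + x1 * x3 * x3 * hkey p r t htr (T 1 1) (T 2 2) + x2 * x3 * x3 * hkey p r t htr (T 2 1) (T 2 2)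
    · simp only [Emul, Prod.mk.injEq]
      refine ⟨?_, ?_, ?_⟩
      · linear_combination x1 * x1 * x2 * hkey p r t htr (T 0 0) (T 0 1) + x1 * x1 * x3 * hkey p r t htr (T 0 0) (T 1 1) + x1 * x2 * x3 * hkey p r t htr (T 0 0) (T 2 1) + x1 * x1 * x2 * hkey p r t htr (T 0 2) (T 1 0) + x1 * x1 * x3 * hkey p r t htr (T 1 0) (T 1 2) + x1 * x2 * x3 * hkey p r t htr (T 1 0) (T 2 2) + x1 * x2 * x2 * hkey p r t htr (T 0 2) (T 2 0) + x1 * x2 * x3 * hkey p r t htr (T 1 2) (T 2 0) + x2 * x2 * x3 * hkey p r t htr (T 2 0) (T 2 2)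
      · linear_combination x1 * x1 * x2 * hkey p r t htr (T 0 1) (T 0 1) + x1 * x1 * x3 * hkey p r t htr (T 0 1) (T 1 1) + x1 * x2 * x3 * hkey p r t htr (T 0 1) (T 2 1) + x1 * x1 * x2 * hkey p r t htr (T 0 2) (T 1 1) + x1 * x1 * x3 * hkey p r t htr (T 1 1) (T 1 2) + x1 * x2 * x3 * hkey p r t htr (T 1 1) (T 2 2) + x1 * x2 * x2 * hkey p r t htr (T 0 2) (T 2 1) + x1 * x2 * x3 * hkey p r t htr (T 1 2) (T 2 1) + x2 * x2 * x3 * hkey p r t htr (T 2 1) (T 2 2)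
      · linear_combination x1 * x1 * x2 * hkey p r t htr (T 0 1) (T 0 2) + x1 * x1 * x3 * hkey p r t htr (T 0 2) (T 1 1) + x1 * x2 * x3 * hkey p r t htr (T 0 2) (T 2 1) + x1 * x1 * x2 * hkey p r t htr (T 0 2) (T 1 2) + x1 * x1 * x3 * hkey p r t htr (T 1 2) (T 1 2) + (2) * x1 * x2 * x3 * hkey p r t htr (T 1 2) (T 2 2) + x1 * x2 * x2 * hkey p r t htr (T 0 2) (T 2 2) + x2 * x2 * x3 * hkey p r t htr (T 2 2) (T 2 2)
end
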